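/- Let T be a binary equireplicate r × c row-column design on v symbols with 2 ≤ r, 2 ≤ c and 1 ≤ v ≤ rc. Then λ_rc = e, λ_rr = c(e − 1)/(r − 1), and λ_cc = r(e − 1)/(c − 1), where e = rc/v. -/

import Mathlib

open Finset

/-- An `r × c` row-column design on `v` symbols is binary if no symbol occurs
twice in any row or in any column. -/
def IsBinaryDesign {r c v : ℕ} (T : Fin r × Fin c → Fin v) : Prop :=
  (∀ (i : Fin r) (j j' : Fin c), j ≠ j' → T (i, j) ≠ T (i, j')) ∧
  (∀ (j : Fin c) (i i' : Fin r), i ≠ i' → T (i, j) ≠ T (i', j))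

/-- The replication number of a symbol `s`: the number of cells containing `s`. -/
def replNum {r c v : ℕ} (T : Fin r × Fin c → Fin v) (s : Fin v) : ℕ :=
  (Finset.univ.filter (fun p : Fin r × Fin c => T p = s)).card

/-- The average replication number `e = rc/v` as a rational number. -/
def avgRepl (r c v : ℕ) : ℚ := ((r : ℚ) * (c : ℚ)) / (v : ℚ)

/-- A design is equireplicate if `e = rc/v` is an integer and every symbol has
replication number `e`. -/
def IsEquireplicate {r c v : ℕ} (T : Fin r × Fin c → Fin v) : Prop :=
  (avgRepl r c v).den = 1 ∧ ∀ s : Fin v, (replNum T s : ℚ) = avgRepl r c v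

/-- A design is near equireplicate if `e = rc/v` is not an integer and every symbol
has replication number `⌊e⌋` or `⌈e⌉`. -/
def IsNearEquireplicate {r c v : ℕ} (T : Fin r × Fin c → Fin v) : Prop :=
  (avgRepl r c v).den ≠ 1 ∧
  ∀ s : Fin v, (replNum T s : ℤ) = ⌊avgRepl r c v⌋ ∨ (replNum T s : ℤ) = ⌈avgRepl r c v⌉

/-- The set of symbols occurring in row `i`. -/
def rowSet {r c v : ℕ} (T : Fin r × Fin c → Fin v) (i : Fin r) : Finset (Fin v) :=
  Finset.univ.image (fun j : Fin c => T (i, j))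

/-- The set of symbols occurring in column `j`. -/
def colSet {r c v : ℕ} (T : Fin r × Fin c → Fin v) (j : Fin c) : Finset (Fin v) :=
  Finset.univ.image (fun i : Fin r => T (i, j))

/-- Average row-column intersection size `λ_rc`. -/
def lamRC {r c v : ℕ} (T : Fin r × Fin c → Fin v) : ℚ :=
  (∑ i : Fin r, ∑ j : Fin c, ((rowSet T i ∩ colSet T j).card : ℚ)) / ((r : ℚ) * (c : ℚ))

/-- Average row-row intersection size `λ_rr`. -/
def lamRR {r c v : ℕ} (T : Fin r × Fin c → Fin v) : ℚ :=
  (∑ p ∈ Finset.univ.filter (fun p : Fin r × Fin r => p.1 < p.2),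
      ((rowSet T p.1 ∩ rowSet T p.2).card : ℚ)) / ((r : ℚ) * ((r : ℚ) - 1) / 2)

/-- Average column-column intersection size `λ_cc`. -/
def lamCC {r c v : ℕ} (T : Fin r × Fin c → Fin v) : ℚ :=
  (∑ p ∈ Finset.univ.filter (fun p : Fin c × Fin c => p.1 < p.2),
      ((colSet T p.1 ∩ colSet T p.2).card : ℚ)) / ((c : ℚ) * ((c : ℚ) - 1) / 2)

/-- An `(r × c, v)`-near triple array. -/
def IsNearTripleArray {r c v : ℕ} (T : Fin r × Fin c → Fin v) : Prop :=
  IsBinaryDesign T ∧ (IsEquireplicate T ∨ IsNearEquireplicate T) ∧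
  (∀ (i : Fin r) (j : Fin c),
    ((rowSet T i ∩ colSet T j).card : ℤ) = ⌊lamRC T⌋ ∨
    ((rowSet T i ∩ colSet T j).card : ℤ) = ⌈lamRC T⌉) ∧
  (∀ i j : Fin r, i ≠ j →
    ((rowSet T i ∩ rowSet T j).card : ℤ) = ⌊lamRR T⌋ ∨
    ((rowSet T i ∩ rowSet T j).card : ℤ) = ⌈lamRR T⌉) ∧
  (∀ i j : Fin c, i ≠ j →
    ((colSet T i ∩ colSet T j).card : ℤ) = ⌊lamCC T⌋ ∨
    ((colSet T i ∩ colSet T j).card : ℤ) = ⌈lamCC T⌉)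

section Helpers
variable {r c v : ℕ} (T : Fin r × Fin c → Fin v)

lemma rowcount_eq (hbin : IsBinaryDesign T) (s : Fin v) :
    (univ.filter (fun i : Fin r => s ∈ rowSet T i)).card = replNum T s := by
  classical
  have himg : (univ.filter (fun p : Fin r × Fin c => T p = s)).image Prod.fst
      = univ.filter (fun i : Fin r => s ∈ rowSet T i) := by
    ext i
    simp only [mem_image, mem_filter, mem_univ, true_and, rowSet]
    constructor
    · rintro ⟨⟨a, b⟩, h, rfl⟩
      exact ⟨b, h⟩
    · rintro ⟨j, hj⟩
      exact ⟨(i, j), hj, rfl⟩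
  have hinj : Set.InjOn Prod.fst
      ((univ.filter (fun p : Fin r × Fin c => T p = s)) : Set (Fin r × Fin c)) := by
    rintro ⟨a, b⟩ ha ⟨a', b'⟩ hb h
    simp only [coe_filter, Set.mem_setOf_eq] at ha hb
    simp only [Prod.fst] at h
    subst h
    by_contra hne
    have hbb : b ≠ b' := fun hb2 => hne (by rw [hb2])
    exact hbin.1 a b b' hbb (ha.2.trans hb.2.symm)
  rw [← himg, Finset.card_image_of_injOn hinj, replNum]

lemma sum_ind_row (hbin : IsBinaryDesign T) (heq : IsEquireplicate T) (s : Fin v) :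
    ∑ i : Fin r, (if s ∈ rowSet T i then (1:ℚ) else 0) = avgRepl r c v := by
  rw [Finset.sum_boole, rowcount_eq T hbin s]
  exact heq.2 s

lemma card_inter_cast (A B : Finset (Fin v)) :
    ((A ∩ B).card : ℚ)
      = ∑ s : Fin v, (if s ∈ A then (1:ℚ) else 0) * (if s ∈ B then (1:ℚ) else 0) := by
  classical
  have h : A ∩ B = univ.filter (fun s => s ∈ A ∧ s ∈ B) := by
    ext x; simp [mem_inter]
  rw [h, ← Finset.sum_boole]
  apply Finset.sum_congr rfl
  intro s _
  by_cases hA : s ∈ A <;> by_cases hB : s ∈ B <;> simp [hA, hB]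

lemma rowSet_card (hbin : IsBinaryDesign T) (i : Fin r) : (rowSet T i).card = c := by
  rw [rowSet, Finset.card_image_of_injective _ ?_, card_univ, Fintype.card_fin]
  intro j j' h
  by_contra hne
  exact hbin.1 i j j' hne h

lemma sum_pairs {n : ℕ} (f : Fin n → Fin n → ℚ) (hsym : ∀ i j, f i j = f j i) :
    ∑ i, ∑ j, f i j =
      2 * ∑ p ∈ univ.filter (fun p : Fin n × Fin n => p.1 < p.2), f p.1 p.2
        + ∑ i, f i i := by
  classical
  have hfil : ∑ p ∈ univ.filter (fun p : Fin n × Fin n => p.1 < p.2), f p.1 p.2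
      = ∑ i, ∑ j, (if i < j then f i j else 0) := by
    rw [Finset.sum_filter]
    exact Fintype.sum_prod_type (f := fun p : Fin n × Fin n => if p.1 < p.2 then f p.1 p.2 else 0)
  have hgt : ∑ i, ∑ j, (if j < i then f i j else 0)
      = ∑ i, ∑ j, (if i < j then f i j else 0) := by
    rw [Finset.sum_comm]
    exact Finset.sum_congr rfl fun i _ => Finset.sum_congr rfl fun j _ => by
      rw [hsym]
  have hdiag : ∑ i, ∑ j, (if i = j then f i j else 0) = ∑ i : Fin n, f i i := by
    refine Finset.sum_congr rfl fun i _ => ?_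
    simp
  have key : ∀ i j : Fin n, f i j =
      (if i < j then f i j else 0) + (if i = j then f i j else 0)
        + (if j < i then f i j else 0) := by
    intro i j
    rcases lt_trichotomy i j with h | h | h
    · simp [h, h.ne, asymm h]
    · simp [h, lt_irrefl]
    · simp [h, (h.ne).symm, asymm h, lt_asymm h]
  calc ∑ i, ∑ j, f i j
      = ∑ i, ∑ j, ((if i < j then f i j else 0) + (if i = j then f i j else 0)
          + (if j < i then f i j else 0)) := by
        exact Finset.sum_congr rfl fun i _ => Finset.sum_congr rfl fun j _ => key i j
    _ = (∑ i, ∑ j, (if i < j then f i j else 0))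
          + (∑ i, ∑ j, (if i = j then f i j else 0))
          + (∑ i, ∑ j, (if j < i then f i j else 0)) := by
        simp [Finset.sum_add_distrib]
    _ = 2 * ∑ p ∈ univ.filter (fun p : Fin n × Fin n => p.1 < p.2), f p.1 p.2
          + ∑ i, f i i := by
        rw [hfil, hgt, hdiag]; ring

end Helpers

section Main
open Finset
variable {r c v : ℕ}

lemma avg_comm (r c v : ℕ) : avgRepl c r v = avgRepl r c v := by
  rw [avgRepl, avgRepl, mul_comm]

/-- The transposed design. -/
def transp (T : Fin r × Fin c → Fin v) : Fin c × Fin r → Fin v := fun p => T (p.2, p.1)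

lemma isBinary_transp (T : Fin r × Fin c → Fin v) (hbin : IsBinaryDesign T) :
    IsBinaryDesign (transp T) :=
  ⟨fun i j j' h => hbin.2 i j j' h, fun j i i' h => hbin.1 j i i' h⟩

lemma replNum_transp (T : Fin r × Fin c → Fin v) (s : Fin v) :
    replNum (transp T) s = replNum T s := by
  classical
  rw [replNum, replNum]
  have h : (univ.filter (fun p : Fin c × Fin r => transp T p = s))
      = (univ.filter (fun p : Fin r × Fin c => T p = s)).image Prod.swap := by
    ext p
    simp only [mem_filter, mem_univ, true_and, mem_image]
    constructor
    · intro h; exact ⟨p.swap, h, Prod.swap_swap p⟩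
    · rintro ⟨q, hq, rfl⟩; exact hq
  rw [h, Finset.card_image_of_injective _ Prod.swap_injective]

lemma isEqui_transp (T : Fin r × Fin c → Fin v) (heq : IsEquireplicate T) :
    IsEquireplicate (transp T) := by
  refine ⟨by rw [avg_comm]; exact heq.1, fun s => ?_⟩
  rw [replNum_transp, avg_comm]; exact heq.2 s

lemma sum_card_inter {m n : ℕ} (A : Fin m → Finset (Fin v)) (B : Fin n → Finset (Fin v))
    (e : ℚ)
    (hA : ∀ s, ∑ i, (if s ∈ A i then (1:ℚ) else 0) = e)
    (hB : ∀ s, ∑ j, (if s ∈ B j then (1:ℚ) else 0) = e) :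
    ∑ i, ∑ j, ((A i ∩ B j).card : ℚ) = v * (e * e) := by
  calc ∑ i, ∑ j, ((A i ∩ B j).card : ℚ)
      = ∑ i, ∑ j, ∑ s : Fin v,
          (if s ∈ A i then (1:ℚ) else 0) * (if s ∈ B j then (1:ℚ) else 0) :=
        Finset.sum_congr rfl fun i _ => Finset.sum_congr rfl fun j _ => card_inter_cast _ _
    _ = ∑ i, ∑ s : Fin v, ∑ j,
          (if s ∈ A i then (1:ℚ) else 0) * (if s ∈ B j then (1:ℚ) else 0) :=
        Finset.sum_congr rfl fun i _ => Finset.sum_comm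
    _ = ∑ s : Fin v, ∑ i, ∑ j,
          (if s ∈ A i then (1:ℚ) else 0) * (if s ∈ B j then (1:ℚ) else 0) :=
        Finset.sum_comm
    _ = ∑ s : Fin v, (∑ i, if s ∈ A i then (1:ℚ) else 0) * (∑ j, if s ∈ B j then (1:ℚ) else 0) := by
        refine Finset.sum_congr rfl fun s _ => ?_
        rw [Finset.sum_mul_sum]
    _ = ∑ _s : Fin v, e * e := Finset.sum_congr rfl fun s _ => by rw [hA, hB]
    _ = v * (e * e) := by rw [Finset.sum_const, card_univ, Fintype.card_fin, nsmul_eq_mul]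

lemma sum_ind_col (T : Fin r × Fin c → Fin v) (hbin : IsBinaryDesign T)
    (heq : IsEquireplicate T) (s : Fin v) :
    ∑ j : Fin c, (if s ∈ colSet T j then (1:ℚ) else 0) = avgRepl r c v := by
  have := sum_ind_row (transp T) (isBinary_transp T hbin) (isEqui_transp T heq) s
  rw [avg_comm] at this
  exact this

lemma lamRC_eq (T : Fin r × Fin c → Fin v) (hr : r ≠ 0) (hc : c ≠ 0) (hv : v ≠ 0)
    (hbin : IsBinaryDesign T) (heq : IsEquireplicate T) :
    lamRC T = avgRepl r c v := by
  set e := avgRepl r c v with he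
  have hv' : (v : ℚ) ≠ 0 := Nat.cast_ne_zero.mpr hv
  have hrc : (r : ℚ) * (c : ℚ) ≠ 0 := by
    exact mul_ne_zero (Nat.cast_ne_zero.mpr hr) (Nat.cast_ne_zero.mpr hc)
  have hev : (v : ℚ) * e = (r : ℚ) * (c : ℚ) := by
    rw [he, avgRepl]; field_simp
  have htot : ∑ i : Fin r, ∑ j : Fin c, ((rowSet T i ∩ colSet T j).card : ℚ)
      = v * (e * e) :=
    sum_card_inter _ _ e (fun s => sum_ind_row T hbin heq s) (fun s => sum_ind_col T hbin heq s)
  rw [lamRC, htot]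
  rw [show (v : ℚ) * (e * e) = ((r : ℚ) * (c : ℚ)) * e by rw [← hev]; ring]
  field_simp

lemma lamRR_eq (T : Fin r × Fin c → Fin v) (hr : 2 ≤ r) (hv : v ≠ 0)
    (hbin : IsBinaryDesign T) (heq : IsEquireplicate T) :
    lamRR T = (c : ℚ) * (avgRepl r c v - 1) / ((r : ℚ) - 1) := by
  set e := avgRepl r c v with he
  have hv' : (v : ℚ) ≠ 0 := Nat.cast_ne_zero.mpr hv
  have hr2 : (2 : ℚ) ≤ (r : ℚ) := by exact_mod_cast hr
  have hrne : (r : ℚ) ≠ 0 := by linarith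
  have hr1 : (r : ℚ) - 1 ≠ 0 := by intro h; nlinarith
  have hev : (v : ℚ) * e = (r : ℚ) * (c : ℚ) := by
    rw [he, avgRepl]; field_simp
  have htot : ∑ i : Fin r, ∑ j : Fin r, ((rowSet T i ∩ rowSet T j).card : ℚ)
      = v * (e * e) :=
    sum_card_inter _ _ e (fun s => sum_ind_row T hbin heq s) (fun s => sum_ind_row T hbin heq s)
  have hdiag : ∑ i : Fin r, ((rowSet T i ∩ rowSet T i).card : ℚ) = (r : ℚ) * (c : ℚ) := by
    have : ∀ i : Fin r, ((rowSet T i ∩ rowSet T i).card : ℚ) = (c : ℚ) := by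
      intro i; rw [Finset.inter_self, rowSet_card T hbin]
    rw [Finset.sum_congr rfl fun i _ => this i, Finset.sum_const, card_univ,
      Fintype.card_fin, nsmul_eq_mul]
  have hsplit := sum_pairs (fun i j => ((rowSet T i ∩ rowSet T j).card : ℚ))
    (fun i j => by rw [Finset.inter_comm])
  rw [htot, hdiag] at hsplit
  have hM : ∑ p ∈ univ.filter (fun p : Fin r × Fin r => p.1 < p.2),
      ((rowSet T p.1 ∩ rowSet T p.2).card : ℚ)
      = ((r : ℚ) * (c : ℚ) * e - (r : ℚ) * (c : ℚ)) / 2 := by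
    have hve : (v : ℚ) * (e * e) = (r : ℚ) * (c : ℚ) * e := by rw [← hev]; ring
    rw [hve] at hsplit
    linarith
  rw [lamRR, hM]
  field_simp

end Main


/-- For a binary equireplicate design, `λ_rc = e`,
`λ_rr = c(e − 1)/(r − 1)` and `λ_cc = r(e − 1)/(c − 1)`. -/
theorem lambda_of_equireplicate {r c v : ℕ} (hr : 2 ≤ r) (hc : 2 ≤ c)
    (hv1 : 1 ≤ v) (hv2 : v ≤ r * c)
    (T : Fin r × Fin c → Fin v) (hbin : IsBinaryDesign T)
    (heq : IsEquireplicate T) :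
    lamRC T = avgRepl r c v ∧
    lamRR T = (c : ℚ) * (avgRepl r c v - 1) / ((r : ℚ) - 1) ∧
    lamCC T = (r : ℚ) * (avgRepl r c v - 1) / ((c : ℚ) - 1) := by
  have hr0 : r ≠ 0 := by omega
  have hc0 : c ≠ 0 := by omega
  have hv0 : v ≠ 0 := by omega
  refine ⟨lamRC_eq T hr0 hc0 hv0 hbin heq, lamRR_eq T hr hv0 hbin heq, ?_⟩
  have h : lamCC T = lamRR (transp T) := rfl
  rw [h, lamRR_eq (transp T) hc hv0 (isBinary_transp T hbin) (isEqui_transp T heq), avg_comm]
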